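/- Let T > 0, K > 1, M > 1 and 0 < ρ < ρ_max be real numbers. Define a₂ = ρ²T²(K − 1) + ρ²T²/ρ_max, b₂ = ρ²T²(K − 1) + ρT² − ρTK − ρT/ρ_max, c₂ = KρT + T, SNR(α) = α(α − 1)ρ²T²(M − 1)/(a₂α² − b₂α − c₂), and R(α) = (K/T)·(−(ρT/ρ_max)·α + T)·log₂(1 + SNR(α)). Then R is quasiconcave on the open interval (0, 1), i.e., for every β ∈ ℝ the super-level set {α ∈ (0,1) : R(α) ≥ β} is convex. -/

import Mathlib

open Set

lemma combo_pos {x y a b : ℝ} (hx : 0 < x) (hy : 0 < y) (ha : 0 ≤ a) (hb : 0 ≤ b)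
    (hab : a + b = 1) : 0 < a * x + b * y := by
  obtain ha0 | ha0 := ha.eq_or_lt
  · have hb1 : b = 1 := by linarith
    rw [← ha0, hb1]; nlinarith
  · nlinarith [mul_pos ha0 hx, mul_nonneg hb hy.le]

lemma log_concaveOn {s : Set ℝ} {f : ℝ → ℝ} (hf : ConcaveOn ℝ s f)
    (hpos : ∀ x ∈ s, 0 < f x) : ConcaveOn ℝ s (fun x => Real.log (f x)) := by
  refine ⟨hf.1, fun x hx y hy a b ha hb hab => ?_⟩
  have h1 : a • f x + b • f y ≤ f (a • x + b • y) := hf.2 hx hy ha hb hab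
  have hfx := hpos x hx
  have hfy := hpos y hy
  have hcomb : (0:ℝ) < a * f x + b * f y := combo_pos hfx hfy ha hb hab
  calc a • Real.log (f x) + b • Real.log (f y)
      ≤ Real.log (a • f x + b • f y) :=
        strictConcaveOn_log_Ioi.concaveOn.2 (mem_Ioi.2 hfx) (mem_Ioi.2 hfy) ha hb hab
    _ ≤ Real.log (f (a • x + b • y)) := Real.log_le_log (by simpa using hcomb) h1

lemma affine_concaveOn {s : Set ℝ} (hs : Convex ℝ s) (m q : ℝ) :
    ConcaveOn ℝ s (fun α => m * α + q) := by
  refine ⟨hs, fun x hx y hy a b ha hb hab => le_of_eq ?_⟩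
  simp only [smul_eq_mul]
  linear_combination q * hab

lemma ratio_concaveOn {d p : ℝ} (hdp : d < p) :
    ConcaveOn ℝ (Set.Ioi p) (fun α => (α - p) / (α - d)) := by
  refine ⟨convex_Ioi p, fun x hx y hy a b ha hb hab => ?_⟩
  simp only [smul_eq_mul, mem_Ioi] at *
  have hx' : (0:ℝ) < x - d := by linarith
  have hy' : (0:ℝ) < y - d := by linarith
  have hb' : b = 1 - a := by linarith
  subst hb'
  have hz' : (0:ℝ) < a * x + (1-a) * y - d := by
    have := combo_pos hx' hy' ha hb hab
    linarith [this]
  rw [← mul_div_assoc, ← mul_div_assoc,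
    div_add_div _ _ (ne_of_gt hx') (ne_of_gt hy'), div_le_div_iff₀ (by positivity) hz']
  nlinarith [mul_nonneg (mul_nonneg (mul_nonneg ha hb) (sub_pos.2 hdp).le) (sq_nonneg (x - y))]

lemma ratio_concaveOn' {p d : ℝ} (hpd : p < d) :
    ConcaveOn ℝ (Set.Iio p) (fun α => (p - α) / (d - α)) := by
  refine ⟨convex_Iio p, fun x hx y hy a b ha hb hab => ?_⟩
  simp only [smul_eq_mul, mem_Iio] at *
  have hx' : (0:ℝ) < d - x := by linarith
  have hy' : (0:ℝ) < d - y := by linarith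
  have hb' : b = 1 - a := by linarith
  subst hb'
  have hz' : (0:ℝ) < d - (a * x + (1-a) * y) := by
    have := combo_pos hx' hy' ha hb hab
    linarith [this]
  rw [← mul_div_assoc, ← mul_div_assoc,
    div_add_div _ _ (ne_of_gt hx') (ne_of_gt hy'), div_le_div_iff₀ (by positivity) hz']
  nlinarith [mul_nonneg (mul_nonneg (mul_nonneg ha hb) (sub_pos.2 hpd).le) (sq_nonneg (x - y))]



set_option maxHeartbeats 1600000 in
/-- The MRC achievable rate along the active peak-power constraint line,
`R(α) = (K/T)(-(ρT/ρ_max)α + T)·log₂(1 + SNR(α))` with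
`SNR(α) = α(α-1)ρ²T²(M-1)/(a₂α² - b₂α - c₂)`, is quasiconcave on `(0,1)`:
every super-level set `{α ∈ (0,1) : R(α) ≥ β}` is convex. -/
theorem mrc_rate_quasiconcave (T K M ρ ρmax : ℝ) (hT : 0 < T) (hK : 1 < K)
    (hM : 1 < M) (hρ : 0 < ρ) (hρmax : ρ < ρmax) :
    let a₂ : ℝ := ρ ^ 2 * T ^ 2 * (K - 1) + ρ ^ 2 * T ^ 2 / ρmax
    let b₂ : ℝ := ρ ^ 2 * T ^ 2 * (K - 1) + ρ * T ^ 2 - ρ * T * K - ρ * T / ρmax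
    let c₂ : ℝ := K * ρ * T + T
    let SNR : ℝ → ℝ := fun α =>
      α * (α - 1) * ρ ^ 2 * T ^ 2 * (M - 1) / (a₂ * α ^ 2 - b₂ * α - c₂)
    let R : ℝ → ℝ := fun α =>
      (K / T) * (-(ρ * T / ρmax) * α + T) * Real.logb 2 (1 + SNR α)
    ∀ β : ℝ, Convex ℝ {α ∈ Set.Ioo (0 : ℝ) 1 | β ≤ R α} := by
  intro a₂ b₂ c₂ SNR R β
  have ha₂ : a₂ = ρ ^ 2 * T ^ 2 * (K - 1) + ρ ^ 2 * T ^ 2 / ρmax := rfl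
  have hb₂ : b₂ = ρ ^ 2 * T ^ 2 * (K - 1) + ρ * T ^ 2 - ρ * T * K - ρ * T / ρmax := rfl
  have hc₂ : c₂ = K * ρ * T + T := rfl
  have hSNR : SNR = fun α =>
      α * (α - 1) * ρ ^ 2 * T ^ 2 * (M - 1) / (a₂ * α ^ 2 - b₂ * α - c₂) := rfl
  have hRdef : R = fun α =>
      (K / T) * (-(ρ * T / ρmax) * α + T) * Real.logb 2 (1 + SNR α) := rfl
  clear_value a₂ b₂ c₂ SNR R
  have hρm : (0:ℝ) < ρmax := hρ.trans hρmax
  have hK1 : (0:ℝ) < K - 1 := by linarith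
  have hM1 : (0:ℝ) < M - 1 := by linarith
  set C : ℝ := ρ ^ 2 * T ^ 2 * (M - 1) with hC
  have hCpos : 0 < C := mul_pos (by positivity) hM1
  have ha₂pos : 0 < a₂ := by
    rw [ha₂]; exact add_pos (mul_pos (by positivity) hK1) (by positivity)
  have hc₂pos : 0 < c₂ := by
    rw [hc₂]; linarith [mul_pos (mul_pos (by linarith : (0:ℝ) < K) hρ) hT]
  have hval1 : a₂ - b₂ - c₂ < 0 := by
    have e : a₂ - b₂ - c₂ = T * (ρ * T + 1) * (ρ - ρmax) / ρmax := by
      rw [ha₂, hb₂, hc₂]; field_simp; ring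
    rw [e]
    exact div_neg_of_neg_of_pos
      (mul_neg_of_pos_of_neg (by positivity) (by linarith)) hρm
  -- roots of D
  have hdiscD : (0:ℝ) < b₂^2 + 4*a₂*c₂ := by
    have h4 : (0:ℝ) < 4*a₂*c₂ := by
      have := mul_pos ha₂pos hc₂pos; linarith
    linarith [sq_nonneg b₂]
  set sD := Real.sqrt (b₂^2 + 4*a₂*c₂) with hsD
  have hsD2 : sD^2 = b₂^2 + 4*a₂*c₂ := Real.sq_sqrt hdiscD.le
  have hsDpos : 0 < sD := Real.sqrt_pos.2 hdiscD
  set dm := (b₂ - sD)/(2*a₂) with hdm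
  set dp := (b₂ + sD)/(2*a₂) with hdp
  have hfacD : ∀ α : ℝ, a₂*α^2 - b₂*α - c₂ = a₂*(α - dm)*(α - dp) := by
    intro α; rw [hdm, hdp]; field_simp; linear_combination hsD2
  have hdmdp : dm < dp := by
    rw [hdm, hdp]; exact div_lt_div_of_pos_right (by linarith) (by positivity)
  have hdm0 : dm < 0 := by
    by_contra h
    push_neg at h
    have hge : 0 ≤ a₂ * (0 - dm) * (0 - dp) := by
      have e : a₂ * (0 - dm) * (0 - dp) = a₂ * dm * dp := by ring
      rw [e]; exact mul_nonneg (mul_nonneg ha₂pos.le h) (h.trans hdmdp.le)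
    linarith [hfacD 0, hge, hc₂pos]
  have hdp1 : 1 < dp := by
    by_contra h
    push_neg at h
    have hge : 0 ≤ a₂ * (1 - dm) * (1 - dp) :=
      mul_nonneg (mul_pos ha₂pos (by linarith : (0:ℝ) < 1 - dm)).le
        (by linarith : (0:ℝ) ≤ 1 - dp)
    linarith [hfacD 1, hval1, hge]
  -- roots of P
  have hdiscP : (0:ℝ) < (b₂+C)^2 + 4*(a₂+C)*c₂ := by
    have h4 : (0:ℝ) < 4*(a₂+C)*c₂ := by
      have := mul_pos (add_pos ha₂pos hCpos) hc₂pos; linarith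
    linarith [sq_nonneg (b₂+C)]
  set sP := Real.sqrt ((b₂+C)^2 + 4*(a₂+C)*c₂) with hsP
  have hsP2 : sP^2 = (b₂+C)^2 + 4*(a₂+C)*c₂ := Real.sq_sqrt hdiscP.le
  have hsPpos : 0 < sP := Real.sqrt_pos.2 hdiscP
  have hAP : 0 < a₂ + C := add_pos ha₂pos hCpos
  set pm := ((b₂+C) - sP)/(2*(a₂+C)) with hpm
  set pp := ((b₂+C) + sP)/(2*(a₂+C)) with hpp
  have hfacP : ∀ α : ℝ, (a₂+C)*α^2 - (b₂+C)*α - c₂ = (a₂+C)*(α - pm)*(α - pp) := by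
    intro α; rw [hpm, hpp]; field_simp; linear_combination hsP2
  have hpmpp : pm < pp := by
    rw [hpm, hpp]; exact div_lt_div_of_pos_right (by linarith) (by positivity)
  have hvalP1 : (a₂+C) - (b₂+C) - c₂ < 0 := by linarith
  have hpm0 : pm < 0 := by
    by_contra h
    push_neg at h
    have hge : 0 ≤ (a₂+C) * (0 - pm) * (0 - pp) := by
      have e : (a₂+C) * (0 - pm) * (0 - pp) = (a₂+C) * pm * pp := by ring
      rw [e]; exact mul_nonneg (mul_nonneg hAP.le h) (h.trans hpmpp.le)
    linarith [hfacP 0, hge, hc₂pos]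
  have hpp1 : 1 < pp := by
    by_contra h
    push_neg at h
    have hge : 0 ≤ (a₂+C) * (1 - pm) * (1 - pp) :=
      mul_nonneg (mul_pos hAP (by linarith : (0:ℝ) < 1 - pm)).le
        (by linarith : (0:ℝ) ≤ 1 - pp)
    linarith [hfacP 1, hvalP1, hge]
  -- interlacing
  have hPdm : (a₂+C)*(dm - pm)*(dm - pp) = C*dm*(dm - 1) := by
    linear_combination (hfacD dm) - (hfacP dm)
  have hPdp : (a₂+C)*(dp - pm)*(dp - pp) = C*dp*(dp - 1) := by
    linear_combination (hfacD dp) - (hfacP dp)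
  have hdmpm : dm < pm := by
    have hR : 0 < C*dm*(dm - 1) :=
      mul_pos_of_neg_of_neg (mul_neg_of_pos_of_neg hCpos hdm0) (by linarith)
    by_contra h
    push_neg at h
    have hle : (a₂+C)*(dm - pm)*(dm - pp) ≤ 0 :=
      mul_nonpos_of_nonneg_of_nonpos (mul_nonneg hAP.le (by linarith)) (by linarith)
    linarith [hPdm]
  have hppdp : pp < dp := by
    have hR : 0 < C*dp*(dp - 1) :=
      mul_pos (mul_pos hCpos (by linarith)) (by linarith)
    by_contra h
    push_neg at h
    have hle : (a₂+C)*(dp - pm)*(dp - pp) ≤ 0 :=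
      mul_nonpos_of_nonneg_of_nonpos (mul_nonneg hAP.le (by linarith)) (by linarith)
    linarith [hPdp]
  -- pointwise facts on Ioo 0 1
  have hDneg : ∀ α ∈ Set.Ioo (0:ℝ) 1, a₂*α^2 - b₂*α - c₂ < 0 := by
    intro α hα
    rw [hfacD α]
    exact mul_neg_of_pos_of_neg (mul_pos ha₂pos (by linarith [hα.1])) (by linarith [hα.2])
  have hSNRpos : ∀ α ∈ Set.Ioo (0:ℝ) 1, 0 < SNR α := by
    intro α hα
    rw [hSNR]
    have hnum : α * (α - 1) * ρ ^ 2 * T ^ 2 * (M - 1) < 0 :=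
      mul_neg_of_neg_of_pos
        (mul_neg_of_neg_of_pos
          (mul_neg_of_neg_of_pos (mul_neg_of_pos_of_neg hα.1 (by linarith [hα.2]))
            (by positivity)) (by positivity)) hM1
    exact div_pos_of_neg_of_neg hnum (hDneg α hα)
  have hfactored : ∀ α ∈ Set.Ioo (0:ℝ) 1, 1 + SNR α =
      ((a₂+C)/a₂) * ((α - pm)/(α - dm)) * ((pp - α)/(dp - α)) := by
    intro α hα
    have hDne : a₂*α^2 - b₂*α - c₂ ≠ 0 := ne_of_lt (hDneg α hα)
    have e1 : 1 + SNR α = ((a₂+C)*α^2 - (b₂+C)*α - c₂)/(a₂*α^2 - b₂*α - c₂) := by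
      rw [hSNR]
      simp only
      rw [hC, eq_div_iff hDne, add_mul, one_mul, div_mul_cancel₀ _ hDne]
      ring
    have h4 : a₂*(α - dm)*(α - dp) ≠ 0 := by rw [← hfacD α]; exact hDne
    have h5 : a₂*(α - dm)*(dp - α) ≠ 0 :=
      ne_of_gt (mul_pos (mul_pos ha₂pos (by linarith [hα.1, hdm0] : (0:ℝ) < α - dm))
        (by linarith [hα.2, hdp1] : (0:ℝ) < dp - α))
    rw [e1, hfacP α, hfacD α, div_mul_div_comm, div_mul_div_comm,
      div_eq_div_iff h4 h5]
    ring
  have hℓpos : ∀ α ∈ Set.Ioo (0:ℝ) 1, 0 < Real.log (1 + SNR α) := fun α hα =>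
    Real.log_pos (by linarith [hSNRpos α hα])
  -- concavity of log(1+SNR)
  have hsub1 : Set.Ioo (0:ℝ) 1 ⊆ Set.Ioi pm := fun x hx => by
    show pm < x; linarith [hx.1]
  have hsub2 : Set.Ioo (0:ℝ) 1 ⊆ Set.Iio pp := fun x hx => by
    simp only [Set.mem_Iio]; linarith [hx.2]
  have hG1 : ConcaveOn ℝ (Set.Ioo (0:ℝ) 1) (fun α => Real.log ((α - pm)/(α - dm))) :=
    log_concaveOn ((ratio_concaveOn hdmpm).subset hsub1 (convex_Ioo 0 1))
      (fun x hx => div_pos (by linarith [hx.1]) (by linarith [hx.1]))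
  have hG2 : ConcaveOn ℝ (Set.Ioo (0:ℝ) 1) (fun α => Real.log ((pp - α)/(dp - α))) :=
    log_concaveOn ((ratio_concaveOn' hppdp).subset hsub2 (convex_Ioo 0 1))
      (fun x hx => div_pos (by linarith [hx.2]) (by linarith [hx.2]))
  have hℓconc : ConcaveOn ℝ (Set.Ioo (0:ℝ) 1) (fun α => Real.log (1 + SNR α)) := by
    refine (((concaveOn_const (Real.log ((a₂+C)/a₂)) (convex_Ioo 0 1)).add hG1).add hG2).congr ?_
    intro α hα
    have h1 : (0:ℝ) < (a₂+C)/a₂ := by positivity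
    have h2 : (0:ℝ) < (α - pm)/(α - dm) := div_pos (by linarith [hα.1]) (by linarith [hα.1])
    have h3 : (0:ℝ) < (pp - α)/(dp - α) := div_pos (by linarith [hα.2]) (by linarith [hα.2])
    simp only
    rw [hfactored α hα, Real.log_mul (by positivity) (ne_of_gt h3),
      Real.log_mul (ne_of_gt h1) (ne_of_gt h2)]
    simp only [Pi.add_apply]
  -- concavity of log(log(1+SNR)) and log(linear)
  have hLL : ConcaveOn ℝ (Set.Ioo (0:ℝ) 1)
      (fun α => Real.log (Real.log (1 + SNR α))) := log_concaveOn hℓconc hℓpos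
  have hLpos : ∀ α ∈ Set.Ioo (0:ℝ) 1, 0 < -(ρ * T / ρmax) * α + T := by
    intro α hα
    have hq : 0 < ρ * T / ρmax := by positivity
    have h1 : ρ * T / ρmax < T := by
      rw [div_lt_iff₀ hρm]; linarith [mul_lt_mul_of_pos_left hρmax hT]
    have h2 : (ρ * T / ρmax) * α < (ρ * T / ρmax) * 1 := mul_lt_mul_of_pos_left hα.2 hq
    linarith
  have hlogL : ConcaveOn ℝ (Set.Ioo (0:ℝ) 1)
      (fun α => Real.log (-(ρ * T / ρmax) * α + T)) :=
    log_concaveOn (affine_concaveOn (convex_Ioo 0 1) (-(ρ * T / ρmax)) T) hLpos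
  have hRpos : ∀ α ∈ Set.Ioo (0:ℝ) 1, 0 < R α := by
    intro α hα
    rw [hRdef]
    exact mul_pos (mul_pos (div_pos (by linarith) hT) (hLpos α hα))
      (Real.logb_pos (by norm_num) (by linarith [hSNRpos α hα]))
  have hlog2 : Real.log 2 ≠ 0 := ne_of_gt (Real.log_pos one_lt_two)
  have hconcR : ConcaveOn ℝ (Set.Ioo (0:ℝ) 1) (fun α => Real.log (R α)) := by
    refine (((concaveOn_const (Real.log (K/T) - Real.log (Real.log 2))
      (convex_Ioo 0 1)).add hlogL).add hLL).congr ?_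
    intro α hα
    simp only
    rw [hRdef]
    simp only
    have hKT : (0:ℝ) < K / T := div_pos (by linarith) hT
    rw [Real.logb, Real.log_mul (ne_of_gt (mul_pos hKT (hLpos α hα)))
        (div_ne_zero (ne_of_gt (hℓpos α hα)) hlog2),
      Real.log_mul (ne_of_gt hKT) (ne_of_gt (hLpos α hα)),
      Real.log_div (ne_of_gt (hℓpos α hα)) hlog2]
    simp only [Pi.add_apply]
    ring
  -- finish
  by_cases hβ : 0 < β
  · have hset : {α ∈ Set.Ioo (0:ℝ) 1 | β ≤ R α}
        = {α ∈ Set.Ioo (0:ℝ) 1 | Real.log β ≤ Real.log (R α)} := by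
      ext α
      simp only [Set.mem_setOf_eq, and_congr_right_iff]
      intro hα
      exact (Real.log_le_log_iff hβ (hRpos α hα)).symm
    rw [hset]
    exact hconcR.convex_ge _
  · have hset : {α ∈ Set.Ioo (0:ℝ) 1 | β ≤ R α} = Set.Ioo (0:ℝ) 1 := by
      ext α
      simp only [Set.mem_setOf_eq, and_iff_left_iff_imp]
      intro hα
      exact le_trans (le_of_not_gt hβ) (hRpos α hα).le
    rw [hset]
    exact convex_Ioo 0 1
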